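/- Let C be a category with all morphisms monic, and let Ω and Ω' be f-injective ind-objects of C. Given embeddings δ : X → Ω_{n_0} and δ' : X' → Ω'_{m_0} and a morphism γ : X → X' in C, there exists an isomorphism of ind-objects α : Ω → Ω' whose restriction along δ agrees with δ' ∘ γ. -/

import Mathlib

open CategoryTheory

universe u v

/-- An ind-object of a category `C`: a sequential diagram `X₁ → X₂ → ⋯` in `C`. -/
structure IndObject (C : Type u) [Category.{v} C] where
  obj : ℕ → C
  map : ∀ n : ℕ, obj n ⟶ obj (n + 1)

namespace IndObject

variable {C : Type u} [Category.{v} C]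

/-- The transition morphism `obj n ⟶ obj m` of an ind-object, for `n ≤ m`. -/
def trans (Ω : IndObject C) : ∀ {n m : ℕ}, n ≤ m → (Ω.obj n ⟶ Ω.obj m) :=
  fun {n m} h =>
    Nat.leRecOn (C := fun m => Ω.obj n ⟶ Ω.obj m) h (fun {l} g => g ≫ Ω.map l) (𝟙 _)

/-- An ind-object is universal if every object of `C` embeds into it. -/
def Universal (Ω : IndObject C) : Prop :=
  ∀ X : C, ∃ n : ℕ, Nonempty (X ⟶ Ω.obj n)

/-- An ind-object is f-injective if every embedding of an object of `C` into it extends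
along any morphism of `C`. -/
def FInjective (Ω : IndObject C) : Prop :=
  ∀ ⦃X Y : C⦄ (α : X ⟶ Y) (n : ℕ) (γ : X ⟶ Ω.obj n),
    ∃ (m : ℕ) (h : n ≤ m) (β : Y ⟶ Ω.obj m), α ≫ β = γ ≫ Ω.trans h

end IndObject


/-- An isomorphism of ind-objects: compatible families of morphisms in both directions
whose composites are the transition maps. -/
structure IndIso {C : Type u} [Category.{v} C] (Ω Ω' : IndObject C) where
  a : ℕ → ℕ
  b : ℕ → ℕ
  amono : Monotone a
  bmono : Monotone b
  fwd : ∀ n : ℕ, Ω.obj n ⟶ Ω'.obj (a n)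
  bwd : ∀ n : ℕ, Ω'.obj n ⟶ Ω.obj (b n)
  fwd_comm : ∀ {n m : ℕ} (h : n ≤ m), Ω.trans h ≫ fwd m = fwd n ≫ Ω'.trans (amono h)
  bwd_comm : ∀ {n m : ℕ} (h : n ≤ m), Ω'.trans h ≫ bwd m = bwd n ≫ Ω.trans (bmono h)
  le_ba : ∀ n : ℕ, n ≤ b (a n)
  le_ab : ∀ n : ℕ, n ≤ a (b n)
  fwd_bwd : ∀ n : ℕ, fwd n ≫ bwd (a n) = Ω.trans (le_ba n)
  bwd_fwd : ∀ n : ℕ, bwd n ≫ fwd (b n) = Ω'.trans (le_ab n)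


/-! ### Auxiliary material for the back-and-forth construction -/

namespace IndObject

variable {C : Type u} [Category.{v} C]

lemma trans_self (Ω : IndObject C) {n : ℕ} (h : n ≤ n) : Ω.trans h = 𝟙 _ :=
  Nat.leRecOn_self _

lemma trans_succ (Ω : IndObject C) {n m : ℕ} (h : n ≤ m) (h' : n ≤ m + 1) :
    Ω.trans h' = Ω.trans h ≫ Ω.map m :=
  Nat.leRecOn_succ h _

lemma trans_trans (Ω : IndObject C) {n m k : ℕ} (h1 : n ≤ m) (h2 : m ≤ k) :
    Ω.trans h1 ≫ Ω.trans h2 = Ω.trans (h1.trans h2) := by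
  induction k, h2 using Nat.le_induction with
  | base => simp [trans_self]
  | succ k h2 ih =>
    rw [Ω.trans_succ h2 (Nat.le_succ_of_le h2),
      Ω.trans_succ (h1.trans h2) (h1.trans (Nat.le_succ_of_le h2)), ← Category.assoc, ih]

end IndObject

namespace BackForth

variable {C : Type u} [Category.{v} C] (Ω Ω' : IndObject C)

/-- A "partial comparison": a map `Ω.obj p ⟶ Ω'.obj q`. -/
structure Tri where
  p : ℕ
  q : ℕ
  u : Ω.obj p ⟶ Ω'.obj q

/-- One step of the back-and-forth: a map back `v` and the next partial comparison. -/
structure Step (s : Tri Ω Ω') where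
  s' : Tri Ω Ω'
  hp : s.p < s'.p
  hq : s.q < s'.q
  v : Ω'.obj s.q ⟶ Ω.obj s'.p
  uv : s.u ≫ v = Ω.trans hp.le
  vu : v ≫ s'.u = Ω'.trans hq.le

variable {Ω Ω'}

theorem step_ex (hΩ : Ω.FInjective) (hΩ' : Ω'.FInjective) (s : Tri Ω Ω') :
    Nonempty (Step Ω Ω' s) := by
  obtain ⟨m, hm, β, hβ⟩ := hΩ s.u s.p (𝟙 _)
  obtain ⟨m', hm', β', hβ'⟩ := hΩ' (β ≫ Ω.map m) s.q (𝟙 _)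
  refine ⟨⟨⟨m + 1, m' + 1, β' ≫ Ω'.map m'⟩, Nat.lt_succ_of_le hm, Nat.lt_succ_of_le hm',
    β ≫ Ω.map m, ?_, ?_⟩⟩
  · rw [← Category.assoc, hβ, Category.id_comp]
    exact (Ω.trans_succ hm _).symm
  · rw [← Category.assoc, hβ', Category.id_comp]
    exact (Ω'.trans_succ hm' _).symm

variable (hΩ : Ω.FInjective) (hΩ' : Ω'.FInjective) (t₀ : Tri Ω Ω')

/-- The chain of partial comparisons, built by iterating `step_ex`. -/
noncomputable def chain : ℕ → Tri Ω Ω'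
  | 0 => t₀
  | k + 1 => ((step_ex hΩ hΩ' (chain k)).some).s'

/-- Index in `Ω` at stage `k`. -/
noncomputable def cp (k : ℕ) : ℕ := (chain hΩ hΩ' t₀ k).p

/-- Index in `Ω'` at stage `k`. -/
noncomputable def cq (k : ℕ) : ℕ := (chain hΩ hΩ' t₀ k).q

/-- Forward map at stage `k`. -/
noncomputable def cu (k : ℕ) : Ω.obj (cp hΩ hΩ' t₀ k) ⟶ Ω'.obj (cq hΩ hΩ' t₀ k) :=
  (chain hΩ hΩ' t₀ k).u

/-- Backward map at stage `k`. -/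
noncomputable def cv (k : ℕ) :
    Ω'.obj (cq hΩ hΩ' t₀ k) ⟶ Ω.obj (cp hΩ hΩ' t₀ (k + 1)) :=
  ((step_ex hΩ hΩ' (chain hΩ hΩ' t₀ k)).some).v

lemma cp_lt (k : ℕ) : cp hΩ hΩ' t₀ k < cp hΩ hΩ' t₀ (k + 1) :=
  ((step_ex hΩ hΩ' (chain hΩ hΩ' t₀ k)).some).hp

lemma cq_lt (k : ℕ) : cq hΩ hΩ' t₀ k < cq hΩ hΩ' t₀ (k + 1) :=
  ((step_ex hΩ hΩ' (chain hΩ hΩ' t₀ k)).some).hq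

lemma cp_strict : StrictMono (cp hΩ hΩ' t₀) :=
  strictMono_nat_of_lt_succ (cp_lt hΩ hΩ' t₀)

lemma cq_strict : StrictMono (cq hΩ hΩ' t₀) :=
  strictMono_nat_of_lt_succ (cq_lt hΩ hΩ' t₀)

lemma le_cp (k : ℕ) : k ≤ cp hΩ hΩ' t₀ k :=
  (cp_strict hΩ hΩ' t₀).le_apply

lemma le_cq (k : ℕ) : k ≤ cq hΩ hΩ' t₀ k :=
  (cq_strict hΩ hΩ' t₀).le_apply

lemma uv (k : ℕ) (h : cp hΩ hΩ' t₀ k ≤ cp hΩ hΩ' t₀ (k + 1)) :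
    cu hΩ hΩ' t₀ k ≫ cv hΩ hΩ' t₀ k = Ω.trans h :=
  ((step_ex hΩ hΩ' (chain hΩ hΩ' t₀ k)).some).uv

lemma vu (k : ℕ) (h : cq hΩ hΩ' t₀ k ≤ cq hΩ hΩ' t₀ (k + 1)) :
    cv hΩ hΩ' t₀ k ≫ cu hΩ hΩ' t₀ (k + 1) = Ω'.trans h :=
  ((step_ex hΩ hΩ' (chain hΩ hΩ' t₀ k)).some).vu

lemma ucoh {k l : ℕ} (hkl : k ≤ l) (h : cp hΩ hΩ' t₀ k ≤ cp hΩ hΩ' t₀ l)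
    (h' : cq hΩ hΩ' t₀ k ≤ cq hΩ hΩ' t₀ l) :
    Ω.trans h ≫ cu hΩ hΩ' t₀ l = cu hΩ hΩ' t₀ k ≫ Ω'.trans h' := by
  induction l, hkl using Nat.le_induction with
  | base => simp [IndObject.trans_self]
  | succ l hkl ih =>
    have h1 : cp hΩ hΩ' t₀ k ≤ cp hΩ hΩ' t₀ l := (cp_strict hΩ hΩ' t₀).monotone hkl
    have h1' : cq hΩ hΩ' t₀ k ≤ cq hΩ hΩ' t₀ l := (cq_strict hΩ hΩ' t₀).monotone hkl
    have h2 : cp hΩ hΩ' t₀ l ≤ cp hΩ hΩ' t₀ (l + 1) := (cp_lt hΩ hΩ' t₀ l).le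
    have h2' : cq hΩ hΩ' t₀ l ≤ cq hΩ hΩ' t₀ (l + 1) := (cq_lt hΩ hΩ' t₀ l).le
    calc Ω.trans h ≫ cu hΩ hΩ' t₀ (l + 1)
        = Ω.trans h1 ≫ Ω.trans h2 ≫ cu hΩ hΩ' t₀ (l + 1) := by
          rw [← Category.assoc, Ω.trans_trans h1 h2]
      _ = Ω.trans h1 ≫ (cu hΩ hΩ' t₀ l ≫ cv hΩ hΩ' t₀ l) ≫ cu hΩ hΩ' t₀ (l + 1) := by
          rw [uv hΩ hΩ' t₀ l h2]
      _ = Ω.trans h1 ≫ cu hΩ hΩ' t₀ l ≫ Ω'.trans h2' := by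
          rw [Category.assoc, vu hΩ hΩ' t₀ l h2']
      _ = (cu hΩ hΩ' t₀ k ≫ Ω'.trans h1') ≫ Ω'.trans h2' := by
          rw [← Category.assoc, ih h1 h1']
      _ = cu hΩ hΩ' t₀ k ≫ Ω'.trans h' := by
          rw [Category.assoc, Ω'.trans_trans h1' h2']

lemma vcoh {k l : ℕ} (hkl : k ≤ l) (h : cq hΩ hΩ' t₀ k ≤ cq hΩ hΩ' t₀ l)
    (h' : cp hΩ hΩ' t₀ (k + 1) ≤ cp hΩ hΩ' t₀ (l + 1)) :
    Ω'.trans h ≫ cv hΩ hΩ' t₀ l = cv hΩ hΩ' t₀ k ≫ Ω.trans h' := by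
  induction l, hkl using Nat.le_induction with
  | base => simp [IndObject.trans_self]
  | succ l hkl ih =>
    have h1 : cq hΩ hΩ' t₀ k ≤ cq hΩ hΩ' t₀ l := (cq_strict hΩ hΩ' t₀).monotone hkl
    have h1' : cp hΩ hΩ' t₀ (k + 1) ≤ cp hΩ hΩ' t₀ (l + 1) :=
      (cp_strict hΩ hΩ' t₀).monotone (Nat.succ_le_succ hkl)
    have h2 : cq hΩ hΩ' t₀ l ≤ cq hΩ hΩ' t₀ (l + 1) := (cq_lt hΩ hΩ' t₀ l).le
    have h2' : cp hΩ hΩ' t₀ (l + 1) ≤ cp hΩ hΩ' t₀ (l + 2) := (cp_lt hΩ hΩ' t₀ (l + 1)).le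
    calc Ω'.trans h ≫ cv hΩ hΩ' t₀ (l + 1)
        = Ω'.trans h1 ≫ Ω'.trans h2 ≫ cv hΩ hΩ' t₀ (l + 1) := by
          rw [← Category.assoc, Ω'.trans_trans h1 h2]
      _ = Ω'.trans h1 ≫ (cv hΩ hΩ' t₀ l ≫ cu hΩ hΩ' t₀ (l + 1)) ≫ cv hΩ hΩ' t₀ (l + 1) := by
          rw [vu hΩ hΩ' t₀ l h2]
      _ = Ω'.trans h1 ≫ cv hΩ hΩ' t₀ l ≫ Ω.trans h2' := by
          rw [Category.assoc, uv hΩ hΩ' t₀ (l + 1) h2']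
      _ = (cv hΩ hΩ' t₀ k ≫ Ω.trans h1') ≫ Ω.trans h2' := by
          rw [← Category.assoc, ih h1 h1']
      _ = cv hΩ hΩ' t₀ k ≫ Ω.trans h' := by
          rw [Category.assoc, Ω.trans_trans h1' h2']

end BackForth


open BackForth

/-- back-and-forth. Given f-injective ind-objects `Ω`, `Ω'`, embeddings
`δ : X → Ω`, `δ' : X' → Ω'` and a morphism `γ : X → X'`, there is an isomorphism of
ind-objects `α : Ω ≅ Ω'` with `α ∘ δ = δ' ∘ γ`. -/
theorem stmt_10 (C : Type u) [Category.{v} C]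
    (hmono : ∀ {X Y : C} (f : X ⟶ Y), Mono f)
    (Ω Ω' : IndObject C) (hΩ : Ω.FInjective) (hΩ' : Ω'.FInjective)
    {X X' : C} (γ : X ⟶ X') (n₀ m₀ : ℕ)
    (δ : X ⟶ Ω.obj n₀) (δ' : X' ⟶ Ω'.obj m₀) :
    ∃ (e : IndIso Ω Ω') (h : m₀ ≤ e.a n₀),
      δ ≫ e.fwd n₀ = γ ≫ δ' ≫ Ω'.trans h := by
  classical
  -- seed: extend `γ ≫ δ'` along `δ`
  obtain ⟨q₀, hq₀, u₀, hu₀⟩ := hΩ' δ m₀ (γ ≫ δ')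
  set t₀ : Tri Ω Ω' := ⟨n₀, q₀, u₀⟩ with ht₀
  -- abbreviations
  set P : ℕ → ℕ := cp hΩ hΩ' t₀ with hP
  set Q : ℕ → ℕ := cq hΩ hΩ' t₀ with hQ
  have hP0 : P 0 = n₀ := rfl
  have hQ0 : Q 0 = q₀ := rfl
  have Pmono : Monotone P := (cp_strict hΩ hΩ' t₀).monotone
  have Qmono : Monotone Q := (cq_strict hΩ hΩ' t₀).monotone
  have lecp : ∀ k, k ≤ P k := le_cp hΩ hΩ' t₀
  have lecq : ∀ k, k ≤ Q k := le_cq hΩ hΩ' t₀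
  refine ⟨{
    a := Q
    b := fun n => P (n + 1)
    amono := Qmono
    bmono := fun n m h => Pmono (Nat.succ_le_succ h)
    fwd := fun n => Ω.trans (lecp n) ≫ cu hΩ hΩ' t₀ n
    bwd := fun n => Ω'.trans (lecq n) ≫ cv hΩ hΩ' t₀ n
    fwd_comm := ?_
    bwd_comm := ?_
    le_ba := fun n => (lecp n).trans (Pmono ((lecq n).trans (Nat.le_succ _)))
    le_ab := fun n => (lecq n).trans (Qmono ((Nat.le_succ n).trans (lecp (n + 1))))
    fwd_bwd := ?_
    bwd_fwd := ?_
  }, hq₀.trans (Qmono (Nat.zero_le n₀)), ?_⟩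
  · -- fwd_comm
    intro n m h
    have h1 : n ≤ P m := h.trans (lecp m)
    calc Ω.trans h ≫ Ω.trans (lecp m) ≫ cu hΩ hΩ' t₀ m
        = Ω.trans h1 ≫ cu hΩ hΩ' t₀ m := by
          rw [← Category.assoc, Ω.trans_trans h (lecp m)]
      _ = Ω.trans (lecp n) ≫ Ω.trans (Pmono h) ≫ cu hΩ hΩ' t₀ m := by
          rw [← Category.assoc, Ω.trans_trans (lecp n) (Pmono h)]
      _ = Ω.trans (lecp n) ≫ cu hΩ hΩ' t₀ n ≫ Ω'.trans (Qmono h) := by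
          rw [ucoh hΩ hΩ' t₀ h (Pmono h) (Qmono h)]
      _ = (Ω.trans (lecp n) ≫ cu hΩ hΩ' t₀ n) ≫ Ω'.trans (Qmono h) := by
          rw [Category.assoc]
  · -- bwd_comm
    intro n m h
    have h1 : n ≤ Q m := h.trans (lecq m)
    calc Ω'.trans h ≫ Ω'.trans (lecq m) ≫ cv hΩ hΩ' t₀ m
        = Ω'.trans h1 ≫ cv hΩ hΩ' t₀ m := by
          rw [← Category.assoc, Ω'.trans_trans h (lecq m)]
      _ = Ω'.trans (lecq n) ≫ Ω'.trans (Qmono h) ≫ cv hΩ hΩ' t₀ m := by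
          rw [← Category.assoc, Ω'.trans_trans (lecq n) (Qmono h)]
      _ = Ω'.trans (lecq n) ≫ cv hΩ hΩ' t₀ n ≫ Ω.trans (Pmono (Nat.succ_le_succ h)) := by
          rw [vcoh hΩ hΩ' t₀ h (Qmono h) (Pmono (Nat.succ_le_succ h))]
      _ = (Ω'.trans (lecq n) ≫ cv hΩ hΩ' t₀ n) ≫ Ω.trans (Pmono (Nat.succ_le_succ h)) := by
          rw [Category.assoc]
  · -- fwd_bwd
    intro n
    have hn : n ≤ Q n := lecq n
    have hPn : P n ≤ P (Q n) := Pmono hn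
    have huvk : P (Q n) ≤ P (Q n + 1) := (cp_lt hΩ hΩ' t₀ (Q n)).le
    have key : cu hΩ hΩ' t₀ n ≫ Ω'.trans (lecq (Q n)) ≫ cv hΩ hΩ' t₀ (Q n)
        = Ω.trans (hPn.trans huvk) := by
      rw [← Category.assoc, ← ucoh hΩ hΩ' t₀ hn hPn (lecq (Q n)), Category.assoc,
        uv hΩ hΩ' t₀ (Q n) huvk, Ω.trans_trans]
    rw [Category.assoc, key, Ω.trans_trans]
  · -- bwd_fwd
    intro n
    have hn1 : n + 1 ≤ P (n + 1) := lecp (n + 1)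
    have hQn : Q (n + 1) ≤ Q (P (n + 1)) := Qmono hn1
    have hvu : Q n ≤ Q (n + 1) := (cq_lt hΩ hΩ' t₀ n).le
    have key : cv hΩ hΩ' t₀ n ≫ Ω.trans (lecp (P (n + 1))) ≫ cu hΩ hΩ' t₀ (P (n + 1))
        = Ω'.trans (hvu.trans hQn) := by
      rw [ucoh hΩ hΩ' t₀ hn1 (lecp (P (n + 1))) hQn, ← Category.assoc,
        vu hΩ hΩ' t₀ n hvu, Ω'.trans_trans]
    rw [Category.assoc, key, Ω'.trans_trans]
  · -- base condition
    have h0 : (0 : ℕ) ≤ n₀ := Nat.zero_le n₀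
    have hP' : P 0 ≤ P n₀ := Pmono h0
    have hQ' : Q 0 ≤ Q n₀ := Qmono h0
    have hu0 : cu hΩ hΩ' t₀ 0 = u₀ := rfl
    calc δ ≫ Ω.trans (lecp n₀) ≫ cu hΩ hΩ' t₀ n₀
        = δ ≫ Ω.trans hP' ≫ cu hΩ hΩ' t₀ n₀ := rfl
      _ = δ ≫ cu hΩ hΩ' t₀ 0 ≫ Ω'.trans hQ' := by
          exact congrArg (δ ≫ ·) (ucoh hΩ hΩ' t₀ h0 hP' hQ')
      _ = (δ ≫ u₀) ≫ Ω'.trans hQ' := by exact (Category.assoc δ (cu hΩ hΩ' t₀ 0) (Ω'.trans hQ')).symm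
      _ = ((γ ≫ δ') ≫ Ω'.trans hq₀) ≫ Ω'.trans hQ' := by rw [hu₀]
      _ = γ ≫ δ' ≫ Ω'.trans (hq₀.trans hQ') := by
          rw [Category.assoc, Category.assoc, Ω'.trans_trans hq₀ hQ']
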